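/- For every x on the unit sphere of a Minkowski plane, there exists y on the unit sphere such that x is isosceles orthogonal to y, i.e. ‖x + y‖ = ‖x − y‖. -/
import Mathlib

theorem exists_isosceles_orthogonal_on_sphere
    {M : Type*} [NormedAddCommGroup M] [NormedSpace ℝ M]
    (hdim : Module.finrank ℝ M = 2)
    (x : M) (hx : ‖x‖ = 1) :
    ∃ y : M, ‖y‖ = 1 ∧ ‖x + y‖ = ‖x - y‖ := by
  have hrank : 1 < Module.rank ℝ M :=
    Module.one_lt_rank_of_one_lt_finrank (by omega)
  have hconn : IsPreconnected (Metric.sphere (0 : M) 1) :=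
    ((isPathConnected_sphere hrank 0 zero_le_one).isConnected).isPreconnected
  set f : M → ℝ := fun y => ‖x + y‖ - ‖x - y‖ with hf
  have hcont : ContinuousOn f (Metric.sphere (0 : M) 1) := by
    apply Continuous.continuousOn
    fun_prop
  have hxmem : x ∈ Metric.sphere (0 : M) 1 := by simp [hx]
  have hnxmem : -x ∈ Metric.sphere (0 : M) 1 := by simp [hx]
  have h2 : ‖x + x‖ = 2 := by
    rw [show x + x = (2 : ℝ) • x from (two_smul ℝ x).symm, norm_smul, hx]
    norm_num
  have hfx : f x = 2 := by simp [hf, h2]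
  have hfnx : f (-x) = -2 := by simp [hf, sub_neg_eq_add, h2]
  have h0 : (0 : ℝ) ∈ Set.Icc (f (-x)) (f x) := by
    rw [hfx, hfnx]; norm_num
  have := hconn.intermediate_value hnxmem hxmem hcont h0
  obtain ⟨y, hy, hfy⟩ := this
  refine ⟨y, by simpa using hy, ?_⟩
  have : ‖x + y‖ - ‖x - y‖ = 0 := hfy
  linarith
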